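/- Let n, k, d ≥ 1 and define the density matrices ρ := Π^k_{d^n} / C(d^n+k−1, k) and σ := 2^{−n} ∑_{S⊆[n]} (Π^k_{d^{|S|}} ⊗_S Π^k_{d^{n−|S|}}) / (C(d^{|S|}+k−1,k)·C(d^{n−|S|}+k−1,k)) on ((ℂ^d)^{⊗n})^{⊗k}. Then Tr(ρσ) = Tr(ρ²) = 1/C(d^n+k−1,k), and consequently the trace distance satisfies D(ρ,σ)² = (¼)‖ρ−σ‖₁² ≤ (d^{nk}/4)·(Tr(σ²) − Tr(ρ²)). -/

import Mathlib

open scoped BigOperators ComplexOrder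

noncomputable def traceNorm {m : Type*} [Fintype m] [DecidableEq m] (A : Matrix m m ℂ) : ℝ :=
  ∑ i, Real.sqrt ((Matrix.isHermitian_conjTranspose_mul_self A).eigenvalues i)

/-- The operator `U^S_α ⊗_S U^{Sᶜ}_β` on `((ℂ^d)^{⊗n})^{⊗k}`: it permutes the `k` copies of
the tensor factors belonging to `S` according to `α` and those belonging to `Sᶜ` according
to `β`. -/
def permPairOn (n k d : ℕ) (S : Finset (Fin n)) (α β : Equiv.Perm (Fin k)) :
    Matrix (Fin k → Fin n → Fin d) (Fin k → Fin n → Fin d) ℂ :=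
  Matrix.of fun y x =>
    if ∀ (i : Fin k) (j : Fin n), x i j = y ((if j ∈ S then α else β) i) j then 1 else 0

/-- The projector `Π^k_{d^{|S|}} ⊗_S Π^k_{d^{n-|S|}}`, i.e. the tensor product of the
projectors onto the symmetric subspaces of the `S` part and the `Sᶜ` part of
`((ℂ^d)^{⊗n})^{⊗k}`. -/
noncomputable def symProjPair (n k d : ℕ) (S : Finset (Fin n)) :
    Matrix (Fin k → Fin n → Fin d) (Fin k → Fin n → Fin d) ℂ :=
  (((k.factorial : ℂ))⁻¹) ^ 2 •
    ∑ α : Equiv.Perm (Fin k), ∑ β : Equiv.Perm (Fin k), permPairOn n k d S α β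

/-- The projector `Π^k_{d^n}` onto the symmetric subspace of `k` copies of `(ℂ^d)^{⊗n}`. -/
noncomputable def symProjFull (n k d : ℕ) :
    Matrix (Fin k → Fin n → Fin d) (Fin k → Fin n → Fin d) ℂ :=
  ((k.factorial : ℂ))⁻¹ • ∑ α : Equiv.Perm (Fin k), permPairOn n k d Finset.univ α α

/-- The state `ρ = Π^k_{d^n} / C(d^n+k-1, k)`. -/
noncomputable def rhoState (n k d : ℕ) :
    Matrix (Fin k → Fin n → Fin d) (Fin k → Fin n → Fin d) ℂ :=
  (((d ^ n + k - 1).choose k : ℂ))⁻¹ • symProjFull n k d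

/-- The state `τ_S = (Π^k_{d^{|S|}} ⊗_S Π^k_{d^{n-|S|}}) / (C(d^{|S|}+k-1,k)·C(d^{n-|S|}+k-1,k))`. -/
noncomputable def tauState (n k d : ℕ) (S : Finset (Fin n)) :
    Matrix (Fin k → Fin n → Fin d) (Fin k → Fin n → Fin d) ℂ :=
  (((d ^ S.card + k - 1).choose k : ℂ) * ((d ^ (n - S.card) + k - 1).choose k : ℂ))⁻¹ •
    symProjPair n k d S

/-- The state `σ = 2^{-n} ∑_{S ⊆ [n]} τ_S`. -/
noncomputable def sigmaState (n k d : ℕ) :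
    Matrix (Fin k → Fin n → Fin d) (Fin k → Fin n → Fin d) ℂ :=
  ((2 : ℂ) ^ n)⁻¹ • ∑ S : Finset (Fin n), tauState n k d S

/-- A vector is a unit vector if the sum of the squared moduli of its entries is 1. -/
def isUnitVec {I : Type*} [Fintype I] (ψ : I → ℂ) : Prop := ∑ x, ‖ψ x‖ ^ 2 = 1

/-- A state `ψ ∈ (ℂ^d)^{⊗n}` is bipartite product if there is a nonempty proper subset
`S ⊂ [n]` and unit vectors on the factors in `S` and in `Sᶜ` whose tensor product is `ψ`. -/
def IsBP {n d : ℕ} (ψ : (Fin n → Fin d) → ℂ) : Prop :=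
  ∃ S : Finset (Fin n), S.Nonempty ∧ S ≠ Finset.univ ∧
    ∃ (φ : ({j : Fin n // j ∈ S} → Fin d) → ℂ) (τ : ({j : Fin n // j ∉ S} → Fin d) → ℂ),
      isUnitVec φ ∧ isUnitVec τ ∧
      ∀ x : Fin n → Fin d, ψ x = φ (fun j => x j.1) * τ (fun j => x j.1)

/-- The `k`-fold tensor power `|ψ⟩⟨ψ|^{⊗ k}` of the rank-one projector onto `ψ`. -/
noncomputable def kcopy {n d : ℕ} (k : ℕ) (ψ : (Fin n → Fin d) → ℂ) :
    Matrix (Fin k → Fin n → Fin d) (Fin k → Fin n → Fin d) ℂ :=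
  Matrix.of fun X Y => ∏ i : Fin k, ψ (X i) * (starRingEnd ℂ) (ψ (Y i))

/-- `ψ` is `ε`-far from bipartite product: every bipartite product unit vector `φ` satisfies
`½‖|ψ⟩⟨ψ| - |φ⟩⟨φ|‖₁ ≥ ε`. -/
def IsFarFromBP {n d : ℕ} (ε : ℝ) (ψ : (Fin n → Fin d) → ℂ) : Prop :=
  ∀ φ : (Fin n → Fin d) → ℂ, isUnitVec φ → IsBP φ →
    ε ≤ (1 / 2) * traceNorm (Matrix.vecMulVec ψ (star ψ) - Matrix.vecMulVec φ (star φ))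

/-- An `ε`-tester for bipartite productness using `k` copies: a POVM element `M` with
`0 ≤ M ≤ 1` accepting every bipartite product state with probability at least `2/3` and every
state `ε`-far from bipartite product with probability at most `1/3`. -/
def IsTester {n d : ℕ} (ε : ℝ) (k : ℕ)
    (M : Matrix (Fin k → Fin n → Fin d) (Fin k → Fin n → Fin d) ℂ) : Prop :=
  M.PosSemidef ∧ (1 - M).PosSemidef ∧
    (∀ ψ : (Fin n → Fin d) → ℂ, isUnitVec ψ → IsBP ψ →
      (2 / 3 : ℝ) ≤ ((M * kcopy k ψ).trace).re) ∧
    (∀ ψ : (Fin n → Fin d) → ℂ, isUnitVec ψ → IsFarFromBP ε ψ →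
      ((M * kcopy k ψ).trace).re ≤ (1 / 3 : ℝ))




open Matrix Finset MulAction

noncomputable def fixC (k : ℕ) (A : Type*) [Fintype A] [DecidableEq A]
    (σ : Equiv.Perm (Fin k)) : ℕ :=
  Fintype.card {v : Fin k → A // ∀ i, v i = v (σ i)}

section Burnside

attribute [local instance] arrowAction

variable (k N : ℕ)

noncomputable def msOf (x : Fin k → Fin N) : Sym (Fin N) k :=
  ⟨Multiset.map x Finset.univ.val, by simp⟩

lemma msOf_comp_perm (x : Fin k → Fin N) (σ : Equiv.Perm (Fin k)) :
    msOf k N (x ∘ σ) = msOf k N x := by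
  apply Subtype.ext
  show Multiset.map (x ∘ σ) Finset.univ.val = Multiset.map x Finset.univ.val
  rw [← Multiset.map_map]
  congr 1
  have h := Finset.map_univ_equiv σ
  have := congrArg Finset.val h
  simpa [Finset.map_val] using this

lemma exists_perm_of_msOf_eq {x y : Fin k → Fin N} (h : msOf k N x = msOf k N y) :
    ∃ σ : Equiv.Perm (Fin k), x = y ∘ σ := by
  have hperm : (List.ofFn x : Multiset (Fin N)) = (List.ofFn y : Multiset (Fin N)) := by
    have := congrArg Subtype.val h
    simpa [msOf, Fin.univ_val_map] using this
  have hp : (List.ofFn x).Perm (List.ofFn y) := Multiset.coe_eq_coe.mp hperm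
  have hxy : x ∘ ⇑(Tuple.sort x) = y ∘ ⇑(Tuple.sort y) := by
    apply List.ofFn_injective
    exact List.Perm.eq_of_sortedLE
      (List.sortedLE_ofFn_iff.mpr (Tuple.monotone_sort x))
      (List.sortedLE_ofFn_iff.mpr (Tuple.monotone_sort y))
      (((Tuple.sort x).ofFn_comp_perm x).trans
        (hp.trans ((Tuple.sort y).ofFn_comp_perm y).symm))
  refine ⟨(Tuple.sort y) * (Tuple.sort x)⁻¹, ?_⟩
  funext i
  have := congrFun hxy ((Tuple.sort x)⁻¹ i)
  simpa using this

noncomputable def orbitEquivSym :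
    MulAction.orbitRel.Quotient (Equiv.Perm (Fin k)) (Fin k → Fin N) ≃ Sym (Fin N) k := by
  refine Equiv.ofBijective (Quotient.lift (msOf k N) ?_) ⟨?_, ?_⟩
  · rintro a b hab
    have hab' : a ∈ MulAction.orbit (Equiv.Perm (Fin k)) b := hab
    rw [MulAction.mem_orbit_iff] at hab'
    obtain ⟨σ, hσ⟩ := hab'
    have ha : a = b ∘ ⇑σ⁻¹ := by
      funext i
      have := congrFun hσ i
      exact this.symm
    rw [ha, msOf_comp_perm]
  · rintro ⟨a⟩ ⟨b⟩ hab
    obtain ⟨σ, hσ⟩ := exists_perm_of_msOf_eq k N hab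
    apply Quotient.sound
    show a ∈ MulAction.orbit (Equiv.Perm (Fin k)) b
    rw [MulAction.mem_orbit_iff]
    refine ⟨σ⁻¹, ?_⟩
    funext i
    show b (σ⁻¹⁻¹ • i) = a i
    rw [hσ]; simp [Equiv.Perm.smul_def]
  · rintro ⟨s, hs⟩
    have hl : s.toList.length = k := by simpa using hs
    refine ⟨Quotient.mk _ (fun i : Fin k => s.toList.get (Fin.cast hl.symm i)), ?_⟩
    rw [Quotient.lift_mk]
    apply Subtype.ext
    simp only [msOf]
    rw [Fin.univ_val_map]
    have : List.ofFn (fun i : Fin k => s.toList.get (Fin.cast hl.symm i)) = s.toList := by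
      apply List.ext_get
      · simp [hl]
      · intro i h1 h2
        simp
    rw [this]
    simp

lemma sum_fixC_fin : ∑ σ : Equiv.Perm (Fin k), fixC k (Fin N) σ
    = (N + k - 1).choose k * k.factorial := by
  classical
  haveI : Fintype (MulAction.orbitRel.Quotient (Equiv.Perm (Fin k)) (Fin k → Fin N)) :=
    Fintype.ofEquiv _ (orbitEquivSym k N).symm
  haveI : ∀ σ : Equiv.Perm (Fin k), Fintype (MulAction.fixedBy (Fin k → Fin N) σ) :=
    fun σ => Fintype.ofFinite _
  have hb := MulAction.sum_card_fixedBy_eq_card_orbits_mul_card_group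
    (Equiv.Perm (Fin k)) (Fin k → Fin N)
  have hfix : ∀ σ : Equiv.Perm (Fin k),
      Fintype.card (MulAction.fixedBy (Fin k → Fin N) σ) = fixC k (Fin N) σ⁻¹ := by
    intro σ
    apply Fintype.card_congr
    refine ⟨fun x => ⟨x.1, fun i => ?_⟩, fun v => ⟨v.1, ?_⟩, fun x => rfl, fun v => rfl⟩
    · have := congrFun x.2 i
      exact this.symm
    · show σ • v.1 = v.1
      funext i
      have := v.2 i
      exact this.symm
  have hre : ∑ σ : Equiv.Perm (Fin k), fixC k (Fin N) σ
      = ∑ σ : Equiv.Perm (Fin k), fixC k (Fin N) σ⁻¹ :=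
    (Equiv.sum_comp (Equiv.inv (Equiv.Perm (Fin k))) (fixC k (Fin N))).symm
  rw [hre, ← Finset.sum_congr rfl (fun σ _ => hfix σ)] at *
  rw [hb]
  congr 1
  · rw [Fintype.card_congr (orbitEquivSym k N), Sym.card_sym_eq_choose, Fintype.card_fin]
  · rw [Fintype.card_perm, Fintype.card_fin]

end Burnside

lemma fixC_congr {k : ℕ} {A B : Type*} [Fintype A] [DecidableEq A] [Fintype B] [DecidableEq B]
    (e : A ≃ B) (σ : Equiv.Perm (Fin k)) : fixC k A σ = fixC k B σ := by
  apply Fintype.card_congr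
  refine ⟨fun x => ⟨fun i => e (x.1 i), fun i => by show e (x.1 i) = e (x.1 (σ i)); rw [x.2 i]⟩,
    fun y => ⟨fun i => e.symm (y.1 i), fun i => by show e.symm (y.1 i) = e.symm (y.1 (σ i)); rw [y.2 i]⟩, fun x => by ext i; simp,
    fun y => by ext i; simp⟩

lemma fixC_pi {k m : ℕ} {A : Type*} [Fintype A] [DecidableEq A] (σ : Equiv.Perm (Fin k)) :
    fixC k (Fin m → A) σ = fixC k A σ ^ m := by
  have e : {x : Fin k → Fin m → A // ∀ i, x i = x (σ i)} ≃
      (Fin m → {v : Fin k → A // ∀ i, v i = v (σ i)}) := by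
    refine ⟨fun x j => ⟨fun i => x.1 i j, fun i => congrFun (x.2 i) j⟩,
      fun y => ⟨fun i j => (y j).1 i, fun i => funext fun j => (y j).2 i⟩,
      fun x => rfl, fun y => rfl⟩
  rw [fixC, Fintype.card_congr e, Fintype.card_fun, fixC]
  simp

lemma sum_fixC (k : ℕ) (A : Type*) [Fintype A] [DecidableEq A] :
    ∑ σ : Equiv.Perm (Fin k), fixC k A σ
      = (Fintype.card A + k - 1).choose k * k.factorial := by
  rw [Finset.sum_congr rfl (fun σ _ => fixC_congr (Fintype.equivFin A) σ), sum_fixC_fin]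

lemma sum_fixC_pow (k d m : ℕ) :
    ∑ σ : Equiv.Perm (Fin k), ((fixC k (Fin d) σ : ℂ)) ^ m
      = ((d ^ m + k - 1).choose k : ℂ) * (k.factorial : ℂ) := by
  have h : ∀ σ : Equiv.Perm (Fin k),
      ((fixC k (Fin d) σ : ℂ)) ^ m = ((fixC k (Fin m → Fin d) σ : ℕ) : ℂ) := by
    intro σ; rw [fixC_pi]; push_cast; ring
  rw [Finset.sum_congr rfl fun σ _ => h σ, ← Nat.cast_sum, sum_fixC]
  have : Fintype.card (Fin m → Fin d) = d ^ m := by simp [Fintype.card_fun]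
  rw [this]; push_cast; ring

def permMat (n k d : ℕ) (G : Fin n → Equiv.Perm (Fin k)) :
    Matrix (Fin k → Fin n → Fin d) (Fin k → Fin n → Fin d) ℂ :=
  Matrix.of fun y x => if ∀ (i : Fin k) (j : Fin n), x i j = y (G j i) j then 1 else 0

lemma trace_permMat_mul (n k d : ℕ) (G H : Fin n → Equiv.Perm (Fin k)) :
    (permMat n k d G * permMat n k d H).trace
      = ∏ j : Fin n, ((fixC k (Fin d) (H j * G j)) : ℂ) := by
  classical
  have hc : ∀ (x y : Fin k → Fin n → Fin d),
      ((∀ (i : Fin k) (j : Fin n), x i j = y (G j i) j) ∧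
        (∀ (i : Fin k) (j : Fin n), y i j = x (H j i) j)) ↔
      ((∀ (i : Fin k) (j : Fin n), x i j = x ((H j) ((G j) i)) j) ∧
        y = fun i j => x (H j i) j) := by
    intro x y
    constructor
    · rintro ⟨h1, h2⟩
      refine ⟨fun i j => ?_, funext fun i => funext fun j => h2 i j⟩
      rw [h1 i j, h2 (G j i) j]
    · rintro ⟨hq, rfl⟩
      exact ⟨fun i j => hq i j, fun i j => rfl⟩
  have hterm : ∀ x y : Fin k → Fin n → Fin d,
      (permMat n k d G) y x * (permMat n k d H) x y
        = if ((∀ (i : Fin k) (j : Fin n), x i j = x ((H j) ((G j) i)) j) ∧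
            y = fun i j => x (H j i) j) then (1:ℂ) else 0 := by
    intro x y
    show (if (∀ (i : Fin k) (j : Fin n), x i j = y (G j i) j) then (1:ℂ) else 0) *
        (if (∀ (i : Fin k) (j : Fin n), y i j = x (H j i) j) then (1:ℂ) else 0) = _
    by_cases h1 : (∀ (i : Fin k) (j : Fin n), x i j = y (G j i) j)
    · by_cases h2 : (∀ (i : Fin k) (j : Fin n), y i j = x (H j i) j)
      · rw [if_pos h1, if_pos h2, if_pos ((hc x y).mp ⟨h1, h2⟩), one_mul]
      · rw [if_neg h2, mul_zero, eq_comm, if_neg]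
        intro hR; exact h2 (((hc x y).mpr hR).2)
    · rw [if_neg h1, zero_mul, eq_comm, if_neg]
      intro hR; exact h1 (((hc x y).mpr hR).1)
  have step1 : (permMat n k d G * permMat n k d H).trace
      = ∑ x : Fin k → Fin n → Fin d,
          if (∀ (i : Fin k) (j : Fin n), x i j = x ((H j) ((G j) i)) j) then (1:ℂ) else 0 := by
    rw [Matrix.trace]
    simp only [Matrix.diag_apply, Matrix.mul_apply]
    rw [Finset.sum_comm]
    refine Finset.sum_congr rfl fun x _ => ?_
    rw [Finset.sum_congr rfl fun y _ => hterm x y]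
    by_cases hQ : (∀ (i : Fin k) (j : Fin n), x i j = x ((H j) ((G j) i)) j)
    · rw [Finset.sum_congr rfl fun y _ => if_congr (and_iff_right hQ) rfl rfl, if_pos hQ]
      simp
    · rw [if_neg hQ, Finset.sum_congr rfl fun y _ => if_neg (fun hR => hQ hR.1)]
      simp
  rw [step1, Finset.sum_boole]
  have hcard : (Finset.univ.filter fun x : Fin k → Fin n → Fin d =>
      (∀ (i : Fin k) (j : Fin n), x i j = x ((H j) ((G j) i)) j)).card
      = ∏ j : Fin n, fixC k (Fin d) (H j * G j) := by
    rw [← Fintype.card_subtype]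
    have e : {x : Fin k → Fin n → Fin d // ∀ (i : Fin k) (j : Fin n), x i j = x ((H j) ((G j) i)) j} ≃
        (∀ j : Fin n, {v : Fin k → Fin d // ∀ i, v i = v ((H j * G j) i)}) :=
      ⟨fun x j => ⟨fun i => x.1 i j, fun i => x.2 i j⟩,
       fun y => ⟨fun i j => (y j).1 i, fun i j => (y j).2 i⟩, fun x => rfl, fun y => rfl⟩
    rw [Fintype.card_congr e, Fintype.card_pi]
    exact Finset.prod_congr rfl fun j _ => Fintype.card_congr (Equiv.refl _)
  rw [hcard]
  push_cast
  ring

lemma permPairOn_eq (n k d : ℕ) (S : Finset (Fin n)) (α β : Equiv.Perm (Fin k)) :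
    permPairOn n k d S α β = permMat n k d (fun j => if j ∈ S then α else β) := rfl

lemma permPairOn_univ (n k d : ℕ) (α : Equiv.Perm (Fin k)) :
    permPairOn n k d Finset.univ α α = permMat n k d (fun _ => α) := by
  rw [permPairOn_eq]
  congr 1
  funext j
  simp

lemma symProjFull_eq (n k d : ℕ) : symProjFull n k d
    = ((k.factorial : ℂ))⁻¹ • ∑ α : Equiv.Perm (Fin k), permMat n k d (fun _ => α) := by
  rw [symProjFull]
  congr 1
  exact Finset.sum_congr rfl fun α _ => permPairOn_univ n k d α

lemma hfact_ne (k : ℕ) : ((k.factorial : ℂ)) ≠ 0 :=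
  Nat.cast_ne_zero.mpr (Nat.factorial_ne_zero k)

lemma trace_full_mul_full (n k d : ℕ) :
    (symProjFull n k d * symProjFull n k d).trace = ((d ^ n + k - 1).choose k : ℂ) := by
  rw [symProjFull_eq, Matrix.smul_mul, Matrix.mul_smul, Matrix.sum_mul]
  simp only [Matrix.mul_sum, Matrix.trace_smul, Matrix.trace_sum, trace_permMat_mul,
    smul_eq_mul]
  have hprod : ∀ α β : Equiv.Perm (Fin k),
      (∏ _j : Fin n, ((fixC k (Fin d) (β * α)) : ℂ)) = ((fixC k (Fin d) (β * α)) : ℂ) ^ n := by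
    intro α β; rw [Finset.prod_const, Finset.card_univ, Fintype.card_fin]
  have hinner : ∀ α : Equiv.Perm (Fin k),
      (∑ β : Equiv.Perm (Fin k), ∏ _j : Fin n, ((fixC k (Fin d) (β * α)) : ℂ))
        = ((d ^ n + k - 1).choose k : ℂ) * (k.factorial : ℂ) := by
    intro α
    rw [Finset.sum_congr rfl fun β _ => hprod α β]
    rw [show (∑ β : Equiv.Perm (Fin k), ((fixC k (Fin d) (β * α)) : ℂ) ^ n)
        = ∑ β : Equiv.Perm (Fin k), ((fixC k (Fin d) β) : ℂ) ^ n from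
      Equiv.sum_comp (Equiv.mulRight α) (fun σ => ((fixC k (Fin d) σ) : ℂ) ^ n)]
    exact sum_fixC_pow k d n
  rw [Finset.sum_congr rfl fun α _ => hinner α, Finset.sum_const, Finset.card_univ,
    Fintype.card_perm, Fintype.card_fin]
  simp only [nsmul_eq_mul]
  field_simp [hfact_ne k]
lemma trace_full_mul_pair (n k d : ℕ) (S : Finset (Fin n)) :
    (symProjFull n k d * symProjPair n k d S).trace
      = ((d ^ S.card + k - 1).choose k : ℂ) * ((d ^ (n - S.card) + k - 1).choose k : ℂ) := by
  rw [symProjFull_eq, symProjPair, Matrix.smul_mul, Matrix.mul_smul, Matrix.sum_mul]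
  simp only [permPairOn_eq, Matrix.mul_sum, Matrix.sum_mul, Matrix.trace_smul, Matrix.trace_sum,
    trace_permMat_mul, smul_eq_mul]
  have hprod : ∀ α β γ : Equiv.Perm (Fin k),
      (∏ j : Fin n, ((fixC k (Fin d) ((if j ∈ S then β else γ) * α)) : ℂ))
        = ((fixC k (Fin d) (β * α)) : ℂ) ^ S.card
          * ((fixC k (Fin d) (γ * α)) : ℂ) ^ (n - S.card) := by
    intro α β γ
    rw [← Finset.prod_mul_prod_compl S]
    congr 1
    · rw [Finset.prod_congr rfl fun j hj => by rw [if_pos hj], Finset.prod_const]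
    · rw [Finset.prod_congr rfl fun j hj => by
        rw [if_neg (Finset.mem_compl.mp hj)], Finset.prod_const, Finset.card_compl,
        Fintype.card_fin]
  have hinner : ∀ α : Equiv.Perm (Fin k),
      (∑ β : Equiv.Perm (Fin k), ∑ γ : Equiv.Perm (Fin k),
          ∏ j : Fin n, ((fixC k (Fin d) ((if j ∈ S then β else γ) * α)) : ℂ))
        = (((d ^ S.card + k - 1).choose k : ℂ) * (k.factorial : ℂ))
          * (((d ^ (n - S.card) + k - 1).choose k : ℂ) * (k.factorial : ℂ)) := by
    intro α
    rw [Finset.sum_congr rfl fun β _ => Finset.sum_congr rfl fun γ _ => hprod α β γ]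
    rw [← Finset.sum_mul_sum]
    congr 1
    · rw [show (∑ β : Equiv.Perm (Fin k), ((fixC k (Fin d) (β * α)) : ℂ) ^ S.card)
          = ∑ β : Equiv.Perm (Fin k), ((fixC k (Fin d) β) : ℂ) ^ S.card from
        Equiv.sum_comp (Equiv.mulRight α) (fun σ => ((fixC k (Fin d) σ) : ℂ) ^ S.card)]
      exact sum_fixC_pow k d S.card
    · rw [show (∑ γ : Equiv.Perm (Fin k), ((fixC k (Fin d) (γ * α)) : ℂ) ^ (n - S.card))
          = ∑ γ : Equiv.Perm (Fin k), ((fixC k (Fin d) γ) : ℂ) ^ (n - S.card) from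
        Equiv.sum_comp (Equiv.mulRight α) (fun σ => ((fixC k (Fin d) σ) : ℂ) ^ (n - S.card))]
      exact sum_fixC_pow k d (n - S.card)
  rw [Finset.sum_congr rfl fun α _ => hinner α, Finset.sum_const, Finset.card_univ,
    Fintype.card_perm, Fintype.card_fin]
  simp only [nsmul_eq_mul]
  have hf := hfact_ne k
  field_simp
lemma choose_ne (k d m : ℕ) (hd : 1 ≤ d) : (((d ^ m + k - 1).choose k : ℂ)) ≠ 0 := by
  have h1 : 1 ≤ d ^ m := Nat.one_le_pow m d hd
  have : k ≤ d ^ m + k - 1 := by omega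
  exact Nat.cast_ne_zero.mpr (Nat.choose_pos this).ne'

lemma trace_rr (n k d : ℕ) (hd : 1 ≤ d) :
    (rhoState n k d * rhoState n k d).trace = (((d ^ n + k - 1).choose k : ℂ))⁻¹ := by
  rw [rhoState, Matrix.smul_mul, Matrix.mul_smul, Matrix.trace_smul, Matrix.trace_smul,
    trace_full_mul_full, smul_eq_mul, smul_eq_mul]
  field_simp [choose_ne k d n hd]

lemma trace_rt (n k d : ℕ) (hd : 1 ≤ d) (S : Finset (Fin n)) :
    (rhoState n k d * tauState n k d S).trace = (((d ^ n + k - 1).choose k : ℂ))⁻¹ := by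
  rw [rhoState, tauState, Matrix.smul_mul, Matrix.mul_smul, Matrix.trace_smul, Matrix.trace_smul,
    trace_full_mul_pair, smul_eq_mul, smul_eq_mul, mul_inv]
  have h1 := choose_ne k d S.card hd
  have h2 := choose_ne k d (n - S.card) hd
  field_simp

lemma trace_rs (n k d : ℕ) (hd : 1 ≤ d) :
    (rhoState n k d * sigmaState n k d).trace = (((d ^ n + k - 1).choose k : ℂ))⁻¹ := by
  rw [sigmaState, Matrix.mul_smul, Matrix.trace_smul, Matrix.mul_sum, Matrix.trace_sum,
    Finset.sum_congr rfl fun S _ => trace_rt n k d hd S, Finset.sum_const, Finset.card_univ,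
    Fintype.card_finset, Fintype.card_fin]
  have h2 : ((2 : ℂ)) ^ n ≠ 0 := pow_ne_zero n two_ne_zero
  simp only [nsmul_eq_mul, smul_eq_mul]
  rw [← mul_assoc]
  rw [show ((2 : ℂ) ^ n)⁻¹ * ((2 ^ n : ℕ) : ℂ) = 1 by push_cast; field_simp, one_mul]
lemma permMat_conjTranspose (n k d : ℕ) (G : Fin n → Equiv.Perm (Fin k)) :
    (permMat n k d G)ᴴ = permMat n k d (fun j => (G j)⁻¹) := by
  ext a b
  show star (if (∀ (i : Fin k) (j : Fin n), a i j = b (G j i) j) then (1:ℂ) else 0)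
      = (if (∀ (i : Fin k) (j : Fin n), b i j = a ((G j)⁻¹ i) j) then (1:ℂ) else 0)
  rw [apply_ite (star : ℂ → ℂ), star_one, star_zero]
  refine if_congr ⟨fun h i j => ?_, fun h i j => ?_⟩ rfl rfl
  · rw [h ((G j)⁻¹ i) j]
    simp
  · rw [h (G j i) j]
    simp
lemma symProjFull_herm (n k d : ℕ) : (symProjFull n k d).IsHermitian := by
  show _ = _
  rw [symProjFull_eq, Matrix.conjTranspose_smul, Matrix.conjTranspose_sum]
  simp only [permMat_conjTranspose]
  congr 1
  · simp
  · rw [show (∑ α : Equiv.Perm (Fin k), permMat n k d fun _ => α⁻¹)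
        = ∑ α : Equiv.Perm (Fin k), permMat n k d (fun _ => α) from
      Equiv.sum_comp (Equiv.inv (Equiv.Perm (Fin k))) (fun σ => permMat n k d (fun _ => σ))]

lemma symProjPair_herm (n k d : ℕ) (S : Finset (Fin n)) : (symProjPair n k d S).IsHermitian := by
  show _ = _
  rw [symProjPair]
  simp only [permPairOn_eq]
  rw [Matrix.conjTranspose_smul, Matrix.conjTranspose_sum]
  simp only [Matrix.conjTranspose_sum, permMat_conjTranspose]
  congr 1
  · simp
  · have h1 : ∀ α β : Equiv.Perm (Fin k),
        (fun j => (if j ∈ S then α else β)⁻¹) = fun j => if j ∈ S then α⁻¹ else β⁻¹ := by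
      intro α β; funext j; rw [apply_ite Inv.inv]
    refine Fintype.sum_equiv (Equiv.inv (Equiv.Perm (Fin k))) _ _ fun α => ?_
    refine Fintype.sum_equiv (Equiv.inv (Equiv.Perm (Fin k))) _ _ fun β => ?_
    rw [h1]
    rfl

lemma rho_herm (n k d : ℕ) : (rhoState n k d).IsHermitian := by
  show _ = _
  rw [rhoState, Matrix.conjTranspose_smul, symProjFull_herm n k d]
  congr 1
  simp

lemma sigma_herm (n k d : ℕ) : (sigmaState n k d).IsHermitian := by
  show _ = _
  rw [sigmaState, Matrix.conjTranspose_smul, Matrix.conjTranspose_sum]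
  congr 1
  · simp
  · refine Finset.sum_congr rfl fun S _ => ?_
    rw [tauState, Matrix.conjTranspose_smul, symProjPair_herm n k d S]
    congr 1
    simp

lemma trace_eq_sum_eigen {ι : Type*} [Fintype ι] [DecidableEq ι] {M : Matrix ι ι ℂ}
    (hM : M.IsHermitian) : M.trace = ∑ i, (hM.eigenvalues i : ℂ) := by
  conv_lhs => rw [hM.spectral_theorem]
  rw [Unitary.conjStarAlgAut_apply, Matrix.trace_mul_cycle]
  rw [show (star (Matrix.IsHermitian.eigenvectorUnitary hM : Matrix ι ι ℂ)
      * (Matrix.IsHermitian.eigenvectorUnitary hM : Matrix ι ι ℂ)) = 1 from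
    Unitary.coe_star_mul_self _, one_mul, Matrix.trace_diagonal]
  simp [RCLike.ofReal]
theorem trace_rho_sigma (n k d : ℕ) (hn : 1 ≤ n) (hk : 1 ≤ k) (hd : 1 ≤ d) :
    (rhoState n k d * sigmaState n k d).trace = (rhoState n k d * rhoState n k d).trace ∧
    (rhoState n k d * rhoState n k d).trace = (((d ^ n + k - 1).choose k : ℂ))⁻¹ ∧
    ((1 / 2) * traceNorm (rhoState n k d - sigmaState n k d)) ^ 2 ≤
      (d : ℝ) ^ (n * k) / 4 *
        (((sigmaState n k d * sigmaState n k d).trace).re -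
          ((rhoState n k d * rhoState n k d).trace).re) := by
  have hrr := trace_rr n k d hd
  have hrs := trace_rs n k d hd
  refine ⟨hrs.trans hrr.symm, hrr, ?_⟩
  set Δ := rhoState n k d - sigmaState n k d with hΔ
  have hHerm : Δ.IsHermitian := (rho_herm n k d).sub (sigma_herm n k d)
  have hpsd : (Δᴴ * Δ).PosSemidef := Matrix.posSemidef_conjTranspose_mul_self Δ
  have hev : ∀ i, 0 ≤ (Matrix.isHermitian_conjTranspose_mul_self Δ).eigenvalues i :=
    fun i => hpsd.eigenvalues_nonneg i
  have htr : (Δᴴ * Δ).trace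
      = (sigmaState n k d * sigmaState n k d).trace
        - (rhoState n k d * rhoState n k d).trace := by
    rw [hHerm, hΔ, Matrix.sub_mul, Matrix.mul_sub, Matrix.mul_sub, Matrix.trace_sub,
      Matrix.trace_sub, Matrix.trace_sub,
      Matrix.trace_mul_comm (sigmaState n k d) (rhoState n k d), hrs, hrr]
    ring
  have hsum : (∑ i, (Matrix.isHermitian_conjTranspose_mul_self Δ).eigenvalues i)
      = ((Δᴴ * Δ).trace).re := by
    rw [trace_eq_sum_eigen (Matrix.isHermitian_conjTranspose_mul_self Δ), ← Complex.ofReal_sum,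
      Complex.ofReal_re]
  have hcard : ((Finset.univ : Finset (Fin k → Fin n → Fin d)).card : ℝ)
      = (d : ℝ) ^ (n * k) := by
    rw [Finset.card_univ]
    rw [show Fintype.card (Fin k → Fin n → Fin d) = d ^ (n * k) by
      simp [Fintype.card_fun, ← pow_mul]]
    push_cast
    ring
  have hCS := sq_sum_le_card_mul_sum_sq (s := (Finset.univ : Finset (Fin k → Fin n → Fin d)))
    (f := fun i => Real.sqrt ((Matrix.isHermitian_conjTranspose_mul_self Δ).eigenvalues i))
  have hsq : ∀ i, (Real.sqrt ((Matrix.isHermitian_conjTranspose_mul_self Δ).eigenvalues i)) ^ 2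
      = (Matrix.isHermitian_conjTranspose_mul_self Δ).eigenvalues i :=
    fun i => Real.sq_sqrt (hev i)
  rw [Finset.sum_congr rfl fun i _ => hsq i, hsum, htr, Complex.sub_re] at hCS
  have key : (traceNorm Δ) ^ 2
      ≤ (d : ℝ) ^ (n * k) *
        (((sigmaState n k d * sigmaState n k d).trace).re -
          ((rhoState n k d * rhoState n k d).trace).re) := by
    calc (traceNorm Δ) ^ 2
        ≤ ((Finset.univ : Finset (Fin k → Fin n → Fin d)).card : ℝ) *
          (((sigmaState n k d * sigmaState n k d).trace).re -
            ((rhoState n k d * rhoState n k d).trace).re) := hCS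
      _ = _ := by rw [hcard]
  calc ((1 / 2) * traceNorm Δ) ^ 2 = (traceNorm Δ) ^ 2 / 4 := by ring
    _ ≤ ((d : ℝ) ^ (n * k) *
        (((sigmaState n k d * sigmaState n k d).trace).re -
          ((rhoState n k d * rhoState n k d).trace).re)) / 4 := by linarith
    _ = _ := by ring
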